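/- Let n be even and consider the (n+1)-form Ω := Σ_{i=0}^{n+1} (-1)^i x_i dx_0 ∧ ⋯ ∧ \widehat{dx_i} ∧ ⋯ ∧ dx_{n+1} on C^{n+2} with coordinates x_0, ..., x_{n+1}. For a strictly increasing multi-index j = (j_0, ..., j_l), let Ω_j := ι_{∂/∂x_{j_0}} ∘ ⋯ ∘ ι_{∂/∂x_{j_l}} Ω be the iterated contraction. Let φ: C^{n/2+1} → C^{n+2} be the linear map sending (y_1, ..., y_{n/2+1}) to (ζ y_1, y_1, ζ y_2, y_2, ..., ζ y_{n/2+1}, y_{n/2+1}) for a fixed nonzero ζ ∈ C. If j has length |j| = n/2 (i.e., l = n/2, so n/2+1 indices) and there exists l' ∈ {1, ..., n/2+1} with both 2l'-2 and 2l'-1 among the entries of j, then the pullback φ*Ω_j = 0. -/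

import Mathlib

/-- The linear map `φ : ℂ^{m+1} → ℂ^{2m+2}`,
`(y_1, …, y_{m+1}) ↦ (ζ y_1, y_1, ζ y_2, y_2, …, ζ y_{m+1}, y_{m+1})`. -/
def phiLin (m : ℕ) (ζ : ℂ) (y : Fin (m+1) → ℂ) : Fin (2*m+2) → ℂ :=
  fun e => (if Even (e : ℕ) then ζ else 1) * y ⟨(e : ℕ)/2, by have := e.isLt; omega⟩

/-- The square matrix whose determinant computes the value of the pulled-back contracted
form `φ*Ω_j` at the point `y` on the vectors `w_1, …, w_m`: its rows are `φ(y)`, then the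
standard basis vectors `e_{j_m}, …, e_{j_0}` (the order produced by the iterated contraction
`ι_{∂x_{j_0}} ∘ ⋯ ∘ ι_{∂x_{j_m}}` of `Ω = Σ (-1)^i x_i dx_0 ∧ ⋯ ∧ \widehat{dx_i} ∧ ⋯`,
whose value at `x` on `(v_1, …, v_{n+1})` is `det(x, v_1, …, v_{n+1})`), then
`φ(w_1), …, φ(w_m)`. -/
def bigRows (m : ℕ) (ζ : ℂ) (j : Fin (m+1) → Fin (2*m+2)) (y : Fin (m+1) → ℂ)
    (w : Fin m → Fin (m+1) → ℂ) : Matrix (Fin (2*m+2)) (Fin (2*m+2)) ℂ :=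
  Matrix.of (fun k => if hk : (k : ℕ) = 0 then phiLin m ζ y
    else if hk2 : (k : ℕ) < m + 2 then
      Pi.single (j ⟨m + 1 - (k : ℕ), by omega⟩) (1 : ℂ)
    else phiLin m ζ (w ⟨(k : ℕ) - (m + 2), by have := k.isLt; omega⟩))

lemma phiLin_apply_even (m : ℕ) (ζ : ℂ) (z : Fin (m+1) → ℂ) (s : ℕ) (hs : s < m+1)
    (e : Fin (2*m+2)) (he : (e : ℕ) = 2*s) : phiLin m ζ z e = ζ * z ⟨s, hs⟩ := by
  unfold phiLin
  rw [if_pos ⟨s, by omega⟩]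
  congr 1
  exact congrArg z (Fin.ext (by simp only [he]; omega))

lemma phiLin_apply_odd (m : ℕ) (ζ : ℂ) (z : Fin (m+1) → ℂ) (s : ℕ) (hs : s < m+1)
    (e : Fin (2*m+2)) (he : (e : ℕ) = 2*s+1) : phiLin m ζ z e = z ⟨s, hs⟩ := by
  unfold phiLin
  rw [if_neg (by rw [he]; exact Nat.not_even_iff_odd.mpr ⟨s, rfl⟩), one_mul]
  exact congrArg z (Fin.ext (by simp only [he]; omega))

/-- If the strictly increasing multi-index `j` of length `n/2` (i.e. `n/2 + 1` indices,
`n = 2m`) contains both elements `2t` and `2t+1` of some pair, then the pullback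
`φ*Ω_j` vanishes identically. -/
theorem stmt_15 (m : ℕ) (ζ : ℂ) (hζ : ζ ≠ 0) (j : Fin (m+1) → Fin (2*m+2))
    (hj : StrictMono j)
    (hex : ∃ t : ℕ, t < m + 1 ∧ (∃ a, (j a : ℕ) = 2*t) ∧ (∃ b, (j b : ℕ) = 2*t+1)) :
    ∀ (y : Fin (m+1) → ℂ) (w : Fin m → Fin (m+1) → ℂ),
      (bigRows m ζ j y w).det = 0 := by
  obtain ⟨t, ht, ⟨a, ha⟩, ⟨b, hb⟩⟩ := hex
  intro y w
  -- pigeonhole: some pair (2s, 2s+1) is disjoint from the range of j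
  set h : Fin (m+1) → Fin (m+1) :=
    fun k => ⟨(j k : ℕ)/2, by have := (j k).isLt; omega⟩ with hh
  have hab : a ≠ b := by
    intro e; rw [e, hb] at ha; omega
  have hninj : ¬ Function.Injective h := by
    intro hi
    refine hab (hi ?_)
    have : ((j a : ℕ))/2 = ((j b : ℕ))/2 := by rw [ha, hb]; omega
    exact Fin.ext this
  have hnsurj : ¬ Function.Surjective h := by
    intro hsurj
    exact hninj (Finite.injective_iff_surjective.mpr hsurj)
  simp only [Function.Surjective, not_forall] at hnsurj
  obtain ⟨s, hs⟩ := hnsurj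
  rw [not_exists] at hs
  have hjs : ∀ k, (j k : ℕ) ≠ 2*(s:ℕ) ∧ (j k : ℕ) ≠ 2*(s:ℕ)+1 := by
    intro k
    have h1 : h k ≠ s := hs k
    have h2 : (j k : ℕ)/2 ≠ (s : ℕ) := by
      intro he; exact h1 (Fin.ext he)
    omega
  have hslt : (s : ℕ) < m + 1 := s.isLt
  set cs : Fin (2*m+2) := ⟨2*(s:ℕ), by omega⟩ with hcs
  set cs1 : Fin (2*m+2) := ⟨2*(s:ℕ)+1, by omega⟩ with hcs1
  rw [← Matrix.exists_mulVec_eq_zero_iff]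
  refine ⟨Pi.single cs 1 + Pi.single cs1 (-ζ), ?_, ?_⟩
  · intro h0
    have h1 := congrFun h0 cs
    have hne : cs ≠ cs1 := by
      simp only [hcs, hcs1, Ne, Fin.mk.injEq]
      omega
    rw [Pi.add_apply, Pi.single_eq_same, Pi.single_eq_of_ne hne] at h1
    simp at h1
  · rw [Matrix.mulVec_add, Matrix.mulVec_single, Matrix.mulVec_single]
    funext k
    simp only [Pi.add_apply, Pi.zero_apply, mul_one]
    unfold bigRows
    simp only [Matrix.of_apply, Pi.smul_apply, Matrix.col_apply, op_smul_eq_mul]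
    split_ifs with hk hk2
    · rw [phiLin_apply_even m ζ y (s:ℕ) hslt cs rfl,
        phiLin_apply_odd m ζ y (s:ℕ) hslt cs1 rfl]
      ring
    · have e1 : ∀ i : Fin (m+1), (Pi.single (j i) (1:ℂ) : Fin (2*m+2) → ℂ) cs = 0 := by
        intro i
        apply Pi.single_eq_of_ne
        intro he
        exact (hjs i).1 (by rw [← he])
      have e2 : ∀ i : Fin (m+1), (Pi.single (j i) (1:ℂ) : Fin (2*m+2) → ℂ) cs1 = 0 := by
        intro i
        apply Pi.single_eq_of_ne
        intro he
        exact (hjs i).2 (by rw [← he])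
      rw [e1, e2]
      ring
    · rw [phiLin_apply_even m ζ _ (s:ℕ) hslt cs rfl,
        phiLin_apply_odd m ζ _ (s:ℕ) hslt cs1 rfl]
      ring
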